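/- Let a, b > 0. If v(τ,ξ) satisfies v_τ + (v_ξ + v_ξξ)² = 0, then u(t,x) = (x/b)·[v(t, log(x/b)) - (a/2)·log(x/b) + (a²/4)·t] satisfies u_t + a·x²·u_xx + b·x³·(u_xx)² = 0 for t > 0, x > 0. -/

import Mathlib

theorem stmt10 (a b : ℝ) (ha : 0 < a) (hb : 0 < b)
    (v : ℝ → ℝ → ℝ)
    (hv : ContDiff ℝ 2 (Function.uncurry v))
    (hvpde : ∀ τ ξ : ℝ,
      deriv (fun s => v s ξ) τ + (deriv (v τ) ξ + deriv (deriv (v τ)) ξ) ^ 2 = 0)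
    (u : ℝ → ℝ → ℝ)
    (hu : ∀ t x : ℝ, u t x = (x / b) *
      (v t (Real.log (x / b)) - (a / 2) * Real.log (x / b) + (a ^ 2 / 4) * t)) :
    ∀ t x : ℝ, 0 < t → 0 < x →
      deriv (fun s => u s x) t
      + a * x ^ 2 * deriv (fun y => deriv (fun z => u t z) y) x
      + b * x ^ 3 * (deriv (fun y => deriv (fun z => u t z) y) x) ^ 2 = 0 := by
  intro t x ht hx
  -- regularity in each variable
  have hvt : ∀ ξ : ℝ, ContDiff ℝ 2 (fun s => v s ξ) := fun ξ =>
    hv.comp (contDiff_id.prodMk contDiff_const)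
  have hvx : ∀ τ : ℝ, ContDiff ℝ 2 (v τ) := fun τ =>
    hv.comp (contDiff_const.prodMk contDiff_id)
  have hvx' : ContDiff ℝ 1 (deriv (v t)) := by
    have h' : ContDiff ℝ ((1:ℕ∞) + 1) (v t) := by
      have := hvx t; norm_num at this ⊢; exact this
    exact (contDiff_succ_iff_deriv.mp h').2.2
  -- pointwise one-variable derivatives of v
  have hdt : ∀ ξ τ : ℝ, HasDerivAt (fun s => v s ξ) (deriv (fun s => v s ξ) τ) τ :=
    fun ξ τ => (((hvt ξ).differentiable (by norm_num)) τ).hasDerivAt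
  have hdx : ∀ ξ : ℝ, HasDerivAt (v t) (deriv (v t) ξ) ξ :=
    fun ξ => (((hvx t).differentiable (by norm_num)) ξ).hasDerivAt
  have hdxx : ∀ ξ : ℝ, HasDerivAt (deriv (v t)) (deriv (deriv (v t)) ξ) ξ :=
    fun ξ => ((hvx'.differentiable (by norm_num)) ξ).hasDerivAt
  -- log derivative
  have hL : ∀ y : ℝ, 0 < y → HasDerivAt (fun z => Real.log (z / b)) (1 / y) y := by
    intro y hy
    have h1 : HasDerivAt (fun z : ℝ => z / b) (1 / b) y := (hasDerivAt_id y).div_const b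
    have h2 := (Real.hasDerivAt_log (div_ne_zero hy.ne' hb.ne')).comp y h1
    refine h2.congr_deriv ?_
    have := hy.ne'
    field_simp
  set ξ := Real.log (x / b) with hξ
  -- time derivative
  have hut : deriv (fun s => u s x) t
      = (x / b) * (deriv (fun s => v s ξ) t + a ^ 2 / 4) := by
    have : (fun s => u s x) = fun s =>
        (x / b) * (v s ξ - (a / 2) * ξ + (a ^ 2 / 4) * s) := by
      funext s; rw [hu s x]
    rw [this]
    have h : HasDerivAt (fun s => v s ξ - (a / 2) * ξ + (a ^ 2 / 4) * s)
        (deriv (fun s => v s ξ) t + a ^ 2 / 4) t := by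
      have h1 := ((hdt ξ t).sub_const ((a / 2) * ξ)).add
        (((hasDerivAt_id t).const_mul (a ^ 2 / 4)))
      simp at h1; exact h1
    exact (h.const_mul (x / b)).deriv
  -- first x-derivative (on a neighborhood)
  have hux : ∀ y : ℝ, 0 < y → HasDerivAt (fun z => u t z)
      ((1 / b) * (v t (Real.log (y / b)) + deriv (v t) (Real.log (y / b))
        - (a / 2) * Real.log (y / b) - a / 2 + (a ^ 2 / 4) * t)) y := by
    intro y hy
    have heq : (fun z => u t z) = fun z =>
        (z / b) * (v t (Real.log (z / b)) - (a / 2) * Real.log (z / b) + (a ^ 2 / 4) * t) := by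
      funext z; rw [hu t z]
    rw [heq]
    have hlog := hL y hy
    have h1 : HasDerivAt (fun z => v t (Real.log (z / b)))
        (deriv (v t) (Real.log (y / b)) * (1 / y)) y :=
      (hdx (Real.log (y / b))).comp y hlog
    have h2 : HasDerivAt (fun z =>
        v t (Real.log (z / b)) - (a / 2) * Real.log (z / b) + (a ^ 2 / 4) * t)
        (deriv (v t) (Real.log (y / b)) * (1 / y) - (a / 2) * (1 / y)) y :=
      (h1.sub (hlog.const_mul (a / 2))).add_const _
    have h3 := (((hasDerivAt_id y).div_const b).mul h2)
    refine h3.congr_deriv ?_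
    have := hy.ne'
    simp only [id]
    field_simp
    ring
  -- second x-derivative
  have huxx : deriv (fun y => deriv (fun z => u t z) y) x
      = (1 / (b * x)) * (deriv (v t) ξ + deriv (deriv (v t)) ξ - a / 2) := by
    have hev : (fun y => deriv (fun z => u t z) y) =ᶠ[nhds x]
        (fun y => (1 / b) * (v t (Real.log (y / b)) + deriv (v t) (Real.log (y / b))
          - (a / 2) * Real.log (y / b) - a / 2 + (a ^ 2 / 4) * t)) := by
      filter_upwards [IsOpen.mem_nhds isOpen_Ioi hx] with y hy
      exact (hux y hy).deriv
    rw [hev.deriv_eq]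
    have hlog := hL x hx
    have h1 : HasDerivAt (fun y => v t (Real.log (y / b))) (deriv (v t) ξ * (1 / x)) x :=
      (hdx ξ).comp x hlog
    have h2 : HasDerivAt (fun y => deriv (v t) (Real.log (y / b)))
        (deriv (deriv (v t)) ξ * (1 / x)) x :=
      by have := (hdxx ξ).comp x hlog; exact this
    have h3 : HasDerivAt (fun y => (1 / b) * (v t (Real.log (y / b))
        + deriv (v t) (Real.log (y / b)) - (a / 2) * Real.log (y / b) - a / 2 + (a ^ 2 / 4) * t))
        ((1 / b) * (deriv (v t) ξ * (1 / x) + deriv (deriv (v t)) ξ * (1 / x)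
          - (a / 2) * (1 / x))) x :=
      ((((h1.add h2).sub (hlog.const_mul (a / 2))).sub_const _).add_const _).const_mul (1 / b)
    rw [h3.deriv]
    field_simp
  rw [hut, huxx]
  have hpde := hvpde t ξ
  have hbx : b * x ≠ 0 := by positivity
  field_simp
  linear_combination (16 * x) * hpde
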